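/- Let Ω be an index set, A = ℝ[x_i : i ∈ Ω], V the span of the variables, and let P be a directed family of seminorms generating a locally convex topology τ on V. Let τ̄ be the topology on A generated by the family of submultiplicative seminorms {(nρ)‾ : ρ ∈ P, n ∈ ℕ}. Then τ̄ is a locally multiplicatively convex topology on A whose restriction to V is τ, and τ̄ is the finest such: for any locally multiplicatively convex topology ω on A (generated by a family of submultiplicative seminorms on A) such that the inclusion map (V, τ) ↪ (A, ω) is continuous, the identity map (A, τ̄) → (A, ω) is continuous, i.e. ω is coarser than τ̄. -/

import Mathlib

open MvPolynomial NNReal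

/-- `V`: the `ℝ`-linear span of the variables inside `A = ℝ[x_i : i ∈ Ω]`. -/
noncomputable def Vars (Ω : Type*) : Submodule ℝ (MvPolynomial Ω ℝ) :=
  Submodule.span ℝ (Set.range (X : Ω → MvPolynomial Ω ℝ))

/-- `ρ̄_k(h)` for `k ≥ 1`: the infimum of `Σ_{i=1}^N ρ(f_{i1})⋯ρ(f_{ik})` over all
representations `h = Σ_{i=1}^N f_{i1}⋯f_{ik}` with `f_{ij} ∈ V`. -/
noncomputable def projExtHomog {Ω : Type*} (ρ : Seminorm ℝ ↥(Vars Ω)) (k : ℕ)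
    (h : MvPolynomial Ω ℝ) : ℝ :=
  sInf {r : ℝ | ∃ (N : ℕ) (f : Fin N → Fin k → ↥(Vars Ω)),
    h = ∑ i, ∏ j, ((f i j : MvPolynomial Ω ℝ)) ∧ r = ∑ i, ∏ j, ρ (f i j)}

/-- The projective extension `ρ̄` of a seminorm `ρ` on `V` to the polynomial algebra. -/
noncomputable def projExt {Ω : Type*} (ρ : Seminorm ℝ ↥(Vars Ω))
    (h : MvPolynomial Ω ℝ) : ℝ :=
  |MvPolynomial.coeff 0 h| +
    ∑ k ∈ Finset.Icc 1 h.totalDegree,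
      projExtHomog ρ k (MvPolynomial.homogeneousComponent k h)

/-- The topology on an additive group generated by a family `Q` of (seminorm-like)
functions: the topology generated by all open balls `{x | q(x - c) < ε}`, `q ∈ Q`. -/
def seminormsTopology {E : Type*} [AddCommGroup E] (Q : Set (E → ℝ)) :
    TopologicalSpace E :=
  TopologicalSpace.generateFrom
    {U : Set E | ∃ q ∈ Q, ∃ c : E, ∃ ε : ℝ, 0 < ε ∧ U = {x : E | q (x - c) < ε}}

/-- `q` is a submultiplicative seminorm (as a real-valued function on an algebra). -/
def IsSubmultSeminorm {A : Type*} [CommRing A] [Algebra ℝ A] (q : A → ℝ) : Prop :=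
  (∀ (c : ℝ) (x : A), q (c • x) = |c| * q x) ∧
    (∀ x y : A, q (x + y) ≤ q x + q y) ∧ ∀ x y : A, q (x * y) ≤ q x * q y

namespace PEAux

variable {Ω : Type*}

def RepSet (ρ : Seminorm ℝ ↥(Vars Ω)) (k : ℕ) (h : MvPolynomial Ω ℝ) : Set ℝ :=
  {r : ℝ | ∃ (N : ℕ) (f : Fin N → Fin k → ↥(Vars Ω)),
    h = ∑ i, ∏ j, ((f i j : MvPolynomial Ω ℝ)) ∧ r = ∑ i, ∏ j, ρ (f i j)}

lemma projExtHomog_def (ρ : Seminorm ℝ ↥(Vars Ω)) (k : ℕ) (h : MvPolynomial Ω ℝ) :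
    projExtHomog ρ k h = sInf (RepSet ρ k h) := rfl

variable {ρ : Seminorm ℝ ↥(Vars Ω)} {k a b : ℕ} {h h₁ h₂ : MvPolynomial Ω ℝ}

lemma repSet_nonneg : ∀ r ∈ RepSet ρ k h, (0:ℝ) ≤ r := by
  rintro r ⟨N, f, -, rfl⟩
  exact Finset.sum_nonneg fun i _ => Finset.prod_nonneg fun j _ => apply_nonneg _ _

lemma repSet_bddBelow : BddBelow (RepSet ρ k h) :=
  ⟨0, fun r hr => repSet_nonneg r hr⟩

lemma zero_mem_repSet_zero : (0:ℝ) ∈ RepSet ρ k 0 :=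
  ⟨0, fun i => absurd i.2 (by simp), by simp, by simp⟩

lemma repSet_add {r₁ r₂ : ℝ} (h₁r : r₁ ∈ RepSet ρ k h₁) (h₂r : r₂ ∈ RepSet ρ k h₂) :
    r₁ + r₂ ∈ RepSet ρ k (h₁ + h₂) := by
  obtain ⟨N₁, f₁, hs₁, hv₁⟩ := h₁r
  obtain ⟨N₂, f₂, hs₂, hv₂⟩ := h₂r
  refine ⟨N₁ + N₂, Fin.append f₁ f₂, ?_, ?_⟩
  · rw [Fin.sum_univ_add]
    simp only [Fin.append_left, Fin.append_right]
    rw [hs₁, hs₂]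
  · rw [Fin.sum_univ_add]
    simp only [Fin.append_left, Fin.append_right]
    rw [hv₁, hv₂]

lemma repSet_mul {r₁ r₂ : ℝ} (h₁r : r₁ ∈ RepSet ρ a h₁) (h₂r : r₂ ∈ RepSet ρ b h₂) :
    r₁ * r₂ ∈ RepSet ρ (a + b) (h₁ * h₂) := by
  obtain ⟨N₁, f₁, hs₁, hv₁⟩ := h₁r
  obtain ⟨N₂, f₂, hs₂, hv₂⟩ := h₂r
  refine ⟨N₁ * N₂, fun p => Fin.append (f₁ (finProdFinEquiv.symm p).1)
      (f₂ (finProdFinEquiv.symm p).2), ?_, ?_⟩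
  · rw [hs₁, hs₂, Finset.sum_mul_sum, ← Equiv.sum_comp finProdFinEquiv, Fintype.sum_prod_type]
    refine Finset.sum_congr rfl fun i _ => Finset.sum_congr rfl fun j _ => ?_
    simp [Fin.prod_univ_add, Fin.append_left, Fin.append_right]
  · rw [hv₁, hv₂, Finset.sum_mul_sum, ← Equiv.sum_comp finProdFinEquiv, Fintype.sum_prod_type]
    refine Finset.sum_congr rfl fun i _ => Finset.sum_congr rfl fun j _ => ?_
    simp [Fin.prod_univ_add, Fin.append_left, Fin.append_right]


lemma repSet_smul (hk : k ≠ 0) (c : ℝ) {r : ℝ} (hr : r ∈ RepSet ρ k h) :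
    |c| * r ∈ RepSet ρ k (c • h) := by
  obtain ⟨N, f, hs, hv⟩ := hr
  have hk' : 0 < k := Nat.pos_of_ne_zero hk
  set j₀ : Fin k := ⟨0, hk'⟩
  refine ⟨N, fun i => Function.update (f i) j₀ (c • f i j₀), ?_, ?_⟩
  · rw [hs, Finset.smul_sum]
    refine Finset.sum_congr rfl fun i _ => ?_
    have h1 : ∀ j, ((Function.update (f i) j₀ (c • f i j₀) j : MvPolynomial Ω ℝ)) =
        Function.update (fun j => ((f i j : MvPolynomial Ω ℝ))) j₀ (c • (f i j₀ : MvPolynomial Ω ℝ)) j := by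
      intro j
      by_cases hj : j = j₀ <;> simp [hj, Function.update]
    rw [Finset.prod_congr rfl fun j _ => h1 j,
      Finset.prod_update_of_mem (Finset.mem_univ j₀), smul_mul_assoc,
      ← Finset.mul_prod_erase Finset.univ _ (Finset.mem_univ j₀), Finset.erase_eq]
  · rw [hv, Finset.mul_sum]
    refine Finset.sum_congr rfl fun i _ => ?_
    have h1 : ∀ j, ρ (Function.update (f i) j₀ (c • f i j₀) j) =
        Function.update (fun j => ρ (f i j)) j₀ (|c| * ρ (f i j₀)) j := by
      intro j
      by_cases hj : j = j₀ <;>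
        simp [hj, Function.update, map_smul_eq_mul, Real.norm_eq_abs]
    rw [Finset.prod_congr rfl fun j _ => h1 j,
      Finset.prod_update_of_mem (Finset.mem_univ j₀), mul_assoc,
      ← Finset.mul_prod_erase Finset.univ _ (Finset.mem_univ j₀), Finset.erase_eq]

lemma degree_sub_single {m : Ω →₀ ℕ} {i : Ω} (hi : m i ≠ 0) :
    m = (m - Finsupp.single i 1) + Finsupp.single i 1 ∧
      Finsupp.degree m = Finsupp.degree (m - Finsupp.single i 1) + 1 := by
  have hle : Finsupp.single i 1 ≤ m := Finsupp.single_le_iff.2 (Nat.one_le_iff_ne_zero.2 hi)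
  have heq : m = (m - Finsupp.single i 1) + Finsupp.single i 1 := (tsub_add_cancel_of_le hle).symm
  refine ⟨heq, ?_⟩
  conv_lhs => rw [heq]
  rw [Finsupp.degree_eq_weight_one, map_add]
  congr 1
  simp [Finsupp.degree_eq_weight_one, Finsupp.weight_apply, Finsupp.sum_single_index]

lemma exists_ne_zero_of_degree_ne_zero {m : Ω →₀ ℕ} (hm : Finsupp.degree m ≠ 0) :
    ∃ i, m i ≠ 0 := by
  by_contra hc
  push_neg at hc
  exact hm (by simp [(Finsupp.degree_eq_zero_iff m).2 (Finsupp.ext fun i => hc i)])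

lemma X_mem_vars (i : Ω) : (X i : MvPolynomial Ω ℝ) ∈ Vars Ω :=
  Submodule.subset_span ⟨i, rfl⟩

lemma monomial_rep : ∀ (n : ℕ) (m : Ω →₀ ℕ), Finsupp.degree m = n + 1 → ∀ c : ℝ,
    ∃ f : Fin (n + 1) → ↥(Vars Ω), (monomial m c : MvPolynomial Ω ℝ) = ∏ j, ↑(f j) := by
  intro n
  induction n with
  | zero =>
    intro m hm c
    obtain ⟨i, hi⟩ := exists_ne_zero_of_degree_ne_zero (Ω := Ω) (by rw [hm]; simp)
    obtain ⟨heq, hdeg⟩ := degree_sub_single hi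
    have h0 : Finsupp.degree (m - Finsupp.single i 1) = 0 := by omega
    have hm0 : m - Finsupp.single i 1 = 0 := (Finsupp.degree_eq_zero_iff _).1 h0
    have hmeq : m = Finsupp.single i 1 := by rw [heq, hm0, zero_add]
    refine ⟨fun _ => ⟨c • X i, Submodule.smul_mem _ c (X_mem_vars i)⟩, ?_⟩
    rw [Fin.prod_univ_one]
    show (monomial m) c = c • (X i : MvPolynomial Ω ℝ)
    have hX : (X i : MvPolynomial Ω ℝ) = monomial (Finsupp.single i 1) 1 := by
      rw [← MvPolynomial.X_pow_eq_monomial, pow_one]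
    rw [hmeq, MvPolynomial.smul_eq_C_mul, hX, MvPolynomial.C_mul_monomial, mul_one]
  | succ n ih =>
    intro m hm c
    obtain ⟨i, hi⟩ := exists_ne_zero_of_degree_ne_zero (Ω := Ω) (by rw [hm]; simp)
    obtain ⟨heq, hdeg⟩ := degree_sub_single hi
    obtain ⟨f', hf'⟩ := ih (m - Finsupp.single i 1) (by omega) c
    refine ⟨Fin.snoc f' ⟨X i, X_mem_vars i⟩, ?_⟩
    rw [Fin.prod_univ_castSucc]
    simp only [Fin.snoc_castSucc, Fin.snoc_last]
    rw [← hf']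
    show _ = (monomial (m - Finsupp.single i 1)) c * (X i : MvPolynomial Ω ℝ)
    conv_lhs => rw [heq]
    rw [add_comm, MvPolynomial.monomial_single_add, pow_one, mul_comm]


lemma repSet_sum_nonempty {α : Type*} (s : Finset α) (g : α → MvPolynomial Ω ℝ)
    (hg : ∀ x ∈ s, (RepSet ρ k (g x)).Nonempty) :
    (RepSet ρ k (∑ x ∈ s, g x)).Nonempty := by
  classical
  induction s using Finset.cons_induction with
  | empty => exact ⟨0, by simpa using zero_mem_repSet_zero⟩
  | cons a s ha ih =>
    obtain ⟨r₁, hr₁⟩ := hg a (Finset.mem_cons_self a s)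
    obtain ⟨r₂, hr₂⟩ := ih fun x hx => hg x (Finset.mem_cons_of_mem hx)
    rw [Finset.sum_cons]
    exact ⟨r₁ + r₂, repSet_add hr₁ hr₂⟩

lemma repSet_nonempty (hk : k ≠ 0) (hh : h.IsHomogeneous k) :
    (RepSet ρ k h).Nonempty := by
  obtain ⟨n, rfl⟩ := Nat.exists_eq_succ_of_ne_zero hk
  conv in h => rw [h.as_sum]
  refine repSet_sum_nonempty h.support _ fun m hm => ?_
  have hdeg : Finsupp.degree m = n + 1 := by
    have := hh (MvPolynomial.mem_support_iff.1 hm)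
    rwa [Finsupp.degree_eq_weight_one]
  obtain ⟨f, hf⟩ := monomial_rep n m hdeg (coeff m h)
  exact ⟨∏ j, ρ (f j), 1, fun _ => f, by simpa using hf, by simp⟩

lemma projExtHomog_nonneg : 0 ≤ projExtHomog ρ k h :=
  Real.sInf_nonneg repSet_nonneg

lemma projExtHomog_zero : projExtHomog ρ k 0 = 0 :=
  le_antisymm (csInf_le repSet_bddBelow zero_mem_repSet_zero) projExtHomog_nonneg

lemma projExtHomog_le {r : ℝ} (hr : r ∈ RepSet ρ k h) : projExtHomog ρ k h ≤ r :=
  csInf_le repSet_bddBelow hr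

lemma le_projExtHomog {b : ℝ} (hne : (RepSet ρ k h).Nonempty)
    (hb : ∀ r ∈ RepSet ρ k h, b ≤ r) : b ≤ projExtHomog ρ k h :=
  le_csInf hne hb

lemma repSet_empty_smul (hk : k ≠ 0) {c : ℝ} (hc : c ≠ 0)
    (he : RepSet ρ k h = ∅) : RepSet ρ k (c • h) = ∅ := by
  by_contra hne
  obtain ⟨r, hr⟩ := Set.nonempty_iff_ne_empty.2 hne
  have := repSet_smul hk c⁻¹ hr
  rw [smul_smul, inv_mul_cancel₀ hc, one_smul] at this
  exact absurd he (Set.nonempty_iff_ne_empty.1 ⟨_, this⟩)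

lemma projExtHomog_smul (hk : k ≠ 0) (c : ℝ) :
    projExtHomog ρ k (c • h) = |c| * projExtHomog ρ k h := by
  rcases eq_or_ne c 0 with rfl | hc
  · simp [projExtHomog_zero]
  have hca : 0 < |c| := abs_pos.2 hc
  rcases Set.eq_empty_or_nonempty (RepSet ρ k h) with he | hne
  · rw [projExtHomog_def, projExtHomog_def, he, repSet_empty_smul hk hc he,
      Real.sInf_empty, mul_zero]
  apply le_antisymm
  · rw [← div_le_iff₀' hca]
    refine le_projExtHomog hne fun r hr => ?_
    rw [div_le_iff₀' hca]
    exact projExtHomog_le (repSet_smul hk c hr)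
  · have h2 : projExtHomog ρ k h ≤ |c|⁻¹ * projExtHomog ρ k (c • h) := by
      have hne' : (RepSet ρ k (c • h)).Nonempty := ⟨_, repSet_smul hk c hne.choose_spec⟩
      rw [← div_le_iff₀' (inv_pos.2 hca)]
      refine le_projExtHomog hne' fun r hr => ?_
      rw [div_le_iff₀' (inv_pos.2 hca)]
      have := projExtHomog_le (repSet_smul hk c⁻¹ hr)
      rwa [smul_smul, inv_mul_cancel₀ hc, one_smul, abs_inv] at this
    calc |c| * projExtHomog ρ k h ≤ |c| * (|c|⁻¹ * projExtHomog ρ k (c • h)) := by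
          exact mul_le_mul_of_nonneg_left h2 (le_of_lt hca)
      _ = projExtHomog ρ k (c • h) := by field_simp

lemma projExtHomog_add_le (hne₁ : (RepSet ρ k h₁).Nonempty)
    (hne₂ : (RepSet ρ k h₂).Nonempty) :
    projExtHomog ρ k (h₁ + h₂) ≤ projExtHomog ρ k h₁ + projExtHomog ρ k h₂ := by
  have key : ∀ r₂ ∈ RepSet ρ k h₂, projExtHomog ρ k (h₁ + h₂) - r₂ ≤ projExtHomog ρ k h₁ := by
    intro r₂ hr₂
    refine le_projExtHomog hne₁ fun r₁ hr₁ => ?_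
    have := projExtHomog_le (repSet_add hr₁ hr₂)
    linarith
  have : projExtHomog ρ k (h₁ + h₂) - projExtHomog ρ k h₁ ≤ projExtHomog ρ k h₂ :=
    le_projExtHomog hne₂ fun r₂ hr₂ => by have := key r₂ hr₂; linarith
  linarith

lemma projExtHomog_mul_le (hne₁ : (RepSet ρ a h₁).Nonempty)
    (hne₂ : (RepSet ρ b h₂).Nonempty) :
    projExtHomog ρ (a + b) (h₁ * h₂) ≤ projExtHomog ρ a h₁ * projExtHomog ρ b h₂ := by
  have step1 : ∀ r₁ ∈ RepSet ρ a h₁,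
      projExtHomog ρ (a + b) (h₁ * h₂) ≤ r₁ * projExtHomog ρ b h₂ := by
    intro r₁ hr₁
    rcases eq_or_lt_of_le (repSet_nonneg r₁ hr₁) with hz | hpos
    · obtain ⟨r₂, hr₂⟩ := hne₂
      have := projExtHomog_le (repSet_mul hr₁ hr₂)
      rw [← hz] at this ⊢
      rw [zero_mul] at this ⊢
      exact this
    · rw [← div_le_iff₀' hpos]
      refine le_projExtHomog hne₂ fun r₂ hr₂ => ?_
      rw [div_le_iff₀' hpos]
      exact projExtHomog_le (repSet_mul hr₁ hr₂)
  rcases eq_or_lt_of_le (projExtHomog_nonneg (ρ := ρ) (k := b) (h := h₂)) with hz | hpos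
  · obtain ⟨r₁, hr₁⟩ := hne₁
    have h1 := step1 r₁ hr₁
    rw [← hz] at h1 ⊢
    rw [mul_zero] at h1 ⊢
    exact h1
  · rw [mul_comm (projExtHomog ρ a h₁), ← div_le_iff₀' hpos]
    refine le_projExtHomog hne₁ fun r₁ hr₁ => ?_
    rw [div_le_iff₀' hpos, mul_comm (projExtHomog ρ b h₂) r₁]
    exact step1 r₁ hr₁


lemma homogeneousComponent_mul (k : ℕ) (x y : MvPolynomial Ω ℝ) :
    homogeneousComponent k (x * y) =
      ∑ p ∈ Finset.HasAntidiagonal.antidiagonal k,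
        homogeneousComponent p.1 x * homogeneousComponent p.2 y := by
  classical
  ext d
  rw [coeff_homogeneousComponent, MvPolynomial.coeff_sum]
  simp_rw [MvPolynomial.coeff_mul, coeff_homogeneousComponent]
  rw [Finset.sum_comm]
  have inner : ∀ p ∈ Finset.HasAntidiagonal.antidiagonal d,
      (∑ q ∈ Finset.HasAntidiagonal.antidiagonal k,
        (if Finsupp.degree p.1 = q.1 then coeff p.1 x else 0) *
          (if Finsupp.degree p.2 = q.2 then coeff p.2 y else 0)) =
      if Finsupp.degree d = k then coeff p.1 x * coeff p.2 y else 0 := by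
    intro p hp
    have hstep : ∀ q ∈ Finset.HasAntidiagonal.antidiagonal k,
        (if Finsupp.degree p.1 = q.1 then coeff p.1 x else 0) *
          (if Finsupp.degree p.2 = q.2 then coeff p.2 y else 0) =
        if (Finsupp.degree p.1, Finsupp.degree p.2) = q then coeff p.1 x * coeff p.2 y
          else 0 := by
      intro q _
      by_cases h1 : Finsupp.degree p.1 = q.1 <;> by_cases h2 : Finsupp.degree p.2 = q.2 <;>
        simp [Prod.ext_iff, h1, h2]
    rw [Finset.sum_congr rfl hstep, Finset.sum_ite_eq (Finset.HasAntidiagonal.antidiagonal k)]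
    have hdeg : Finsupp.degree p.1 + Finsupp.degree p.2 = Finsupp.degree d := by
      have := Finset.HasAntidiagonal.mem_antidiagonal.1 hp
      rw [← this, Finsupp.degree_eq_weight_one, map_add]
    by_cases hd : Finsupp.degree d = k
    · rw [if_pos (Finset.HasAntidiagonal.mem_antidiagonal.2 (by omega)), if_pos hd]
    · rw [if_neg (fun hmem => hd (by have := Finset.HasAntidiagonal.mem_antidiagonal.1 hmem; omega)), if_neg hd]
  rw [Finset.sum_congr rfl inner]
  split_ifs with hd
  · rfl
  · simp

lemma repSet_hc_nonempty (hk : k ≠ 0) (x : MvPolynomial Ω ℝ) :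
    (RepSet ρ k (homogeneousComponent k x)).Nonempty :=
  repSet_nonempty hk (homogeneousComponent_isHomogeneous k x)

lemma projExtHomog_sum_le {α : Type*} (s : Finset α) (g : α → MvPolynomial Ω ℝ)
    (hg : ∀ x ∈ s, (RepSet ρ k (g x)).Nonempty) :
    projExtHomog ρ k (∑ x ∈ s, g x) ≤ ∑ x ∈ s, projExtHomog ρ k (g x) := by
  classical
  induction s using Finset.cons_induction with
  | empty => simp [projExtHomog_zero]
  | cons a s ha ih =>
    rw [Finset.sum_cons, Finset.sum_cons]
    refine le_trans (projExtHomog_add_le (hg a (Finset.mem_cons_self a s))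
      (repSet_sum_nonempty s g fun x hx => hg x (Finset.mem_cons_of_mem hx))) ?_
    exact add_le_add le_rfl (ih fun x hx => hg x (Finset.mem_cons_of_mem hx))

end PEAux

namespace PEAux

variable {ρ : Seminorm ℝ ↥(Vars Ω)} {k a b : ℕ} {h h₁ h₂ : MvPolynomial Ω ℝ}

lemma projExt_eq_sum {D : ℕ} (hD : h.totalDegree ≤ D) :
    projExt ρ h = |coeff 0 h| +
      ∑ k ∈ Finset.Icc 1 D, projExtHomog ρ k (homogeneousComponent k h) := by
  unfold projExt
  congr 1
  refine Finset.sum_subset (Finset.Icc_subset_Icc_right hD) fun k hk hk' => ?_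
  have hlt : h.totalDegree < k := by
    simp only [Finset.mem_Icc] at hk hk'
    omega
  rw [homogeneousComponent_eq_zero _ _ hlt, projExtHomog_zero]

lemma projExt_zero : projExt ρ 0 = 0 := by
  simp [projExt]

lemma projExt_nonneg (x : MvPolynomial Ω ℝ) : 0 ≤ projExt ρ x := by
  unfold projExt
  refine add_nonneg (abs_nonneg _) (Finset.sum_nonneg fun k _ => projExtHomog_nonneg)

lemma projExt_smul (c : ℝ) (x : MvPolynomial Ω ℝ) :
    projExt ρ (c • x) = |c| * projExt ρ x := by
  rcases eq_or_ne c 0 with rfl | hc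
  · simp [projExt_zero]
  rw [projExt_eq_sum (D := x.totalDegree) (totalDegree_smul_le c x),
    projExt_eq_sum (le_refl x.totalDegree), mul_add, Finset.mul_sum]
  congr 1
  · rw [MvPolynomial.coeff_smul, smul_eq_mul, abs_mul]
  · refine Finset.sum_congr rfl fun k hk => ?_
    have hk0 : k ≠ 0 := by
      simp only [Finset.mem_Icc] at hk
      omega
    rw [LinearMap.map_smul, projExtHomog_smul hk0]

lemma projExt_add_le (x y : MvPolynomial Ω ℝ) :
    projExt ρ (x + y) ≤ projExt ρ x + projExt ρ y := by
  set D := max x.totalDegree y.totalDegree with hD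
  rw [projExt_eq_sum (D := D) (le_trans (totalDegree_add x y) le_rfl),
    projExt_eq_sum (D := D) (le_max_left _ _), projExt_eq_sum (D := D) (le_max_right _ _)]
  have h1 : |coeff 0 (x + y)| ≤ |coeff 0 x| + |coeff 0 y| := by
    rw [MvPolynomial.coeff_add]
    exact abs_add_le _ _
  have h2 : ∑ k ∈ Finset.Icc 1 D, projExtHomog ρ k (homogeneousComponent k (x + y)) ≤
      ∑ k ∈ Finset.Icc 1 D, (projExtHomog ρ k (homogeneousComponent k x) +
        projExtHomog ρ k (homogeneousComponent k y)) := by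
    refine Finset.sum_le_sum fun k hk => ?_
    have hk0 : k ≠ 0 := by
      simp only [Finset.mem_Icc] at hk
      omega
    rw [map_add]
    exact projExtHomog_add_le (repSet_hc_nonempty hk0 x) (repSet_hc_nonempty hk0 y)
  rw [Finset.sum_add_distrib] at h2
  linarith

end PEAux

namespace PEAux2
open PEAux
variable {Ω : Type*} {ρ : Seminorm ℝ ↥(Vars Ω)}

lemma range_succ_eq_insert (D : ℕ) :
    Finset.range (D + 1) = insert 0 (Finset.Icc 1 D) := by
  ext m
  simp only [Finset.mem_range, Finset.mem_insert, Finset.mem_Icc]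
  omega

lemma projExt_eq_range_sum {x : MvPolynomial Ω ℝ} {D : ℕ} (hD : x.totalDegree ≤ D) :
    projExt ρ x = ∑ a ∈ Finset.range (D + 1),
      (if a = 0 then |coeff 0 x| else projExtHomog ρ a (homogeneousComponent a x)) := by
  rw [range_succ_eq_insert, Finset.sum_insert (by simp), if_pos rfl,
    projExt_eq_sum hD]
  congr 1
  refine Finset.sum_congr rfl fun k hk => ?_
  have : k ≠ 0 := by
    simp only [Finset.mem_Icc] at hk
    omega
  rw [if_neg this]

lemma projExt_mul_le (x y : MvPolynomial Ω ℝ) :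
    projExt ρ (x * y) ≤ projExt ρ x * projExt ρ y := by
  classical
  set D := x.totalDegree + y.totalDegree with hDdef
  set T : ℕ → ℝ := fun a =>
    if a = 0 then |coeff 0 x| else projExtHomog ρ a (homogeneousComponent a x) with hT
  set S : ℕ → ℝ := fun b =>
    if b = 0 then |coeff 0 y| else projExtHomog ρ b (homogeneousComponent b y) with hS
  have hT0 : ∀ a, 0 ≤ T a := fun a => by
    rw [hT]; dsimp only; split_ifs; exacts [abs_nonneg _, projExtHomog_nonneg]
  have hS0 : ∀ b, 0 ≤ S b := fun b => by
    rw [hS]; dsimp only; split_ifs; exacts [abs_nonneg _, projExtHomog_nonneg]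
  -- key componentwise bound
  have key : ∀ k, k ≠ 0 → projExtHomog ρ k (homogeneousComponent k (x * y)) ≤
      ∑ p ∈ Finset.HasAntidiagonal.antidiagonal k, T p.1 * S p.2 := by
    intro k hk0
    rw [homogeneousComponent_mul]
    have hne : ∀ p ∈ Finset.HasAntidiagonal.antidiagonal k,
        (RepSet ρ k (homogeneousComponent p.1 x * homogeneousComponent p.2 y)).Nonempty := by
      intro p hp
      refine repSet_nonempty hk0 ?_
      have hab : p.1 + p.2 = k := Finset.HasAntidiagonal.mem_antidiagonal.1 hp
      exact hab ▸ ((homogeneousComponent_isHomogeneous p.1 x).mul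
        (homogeneousComponent_isHomogeneous p.2 y))
    refine le_trans (projExtHomog_sum_le _ _ hne) (Finset.sum_le_sum fun p hp => ?_)
    obtain ⟨a, b⟩ := p
    have hab : a + b = k := Finset.HasAntidiagonal.mem_antidiagonal.1 hp
    dsimp only
    rcases Nat.eq_zero_or_pos a with rfl | hapos
    · have hb : b = k := by omega
      subst hb
      rw [homogeneousComponent_zero, ← MvPolynomial.smul_eq_C_mul, projExtHomog_smul hk0]
      rw [hT, hS]
      simp only [eq_self_iff_true, if_true, if_neg hk0]
      exact le_refl _
    rcases Nat.eq_zero_or_pos b with rfl | hbpos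
    · have ha : a = k := by omega
      subst ha
      rw [homogeneousComponent_zero, mul_comm, ← MvPolynomial.smul_eq_C_mul,
        projExtHomog_smul hk0]
      rw [hT, hS]
      simp only [eq_self_iff_true, if_true, if_neg hk0]
      rw [mul_comm]
    · have ha0 : a ≠ 0 := by omega
      have hb0 : b ≠ 0 := by omega
      subst hab
      refine le_trans (projExtHomog_mul_le (repSet_hc_nonempty ha0 x)
        (repSet_hc_nonempty hb0 y)) ?_
      rw [hT, hS]
      simp only [if_neg ha0, if_neg hb0]
      exact le_refl _
  -- assemble
  have habs : |coeff 0 (x * y)| = T 0 * S 0 := by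
    have hc : coeff 0 (x * y) = coeff 0 x * coeff 0 y := by
      rw [MvPolynomial.coeff_mul]
      simp
    rw [hT, hS]
    simp [hc, abs_mul]
  have step1 : projExt ρ (x * y) ≤
      ∑ k ∈ Finset.range (D + 1), ∑ p ∈ Finset.HasAntidiagonal.antidiagonal k, T p.1 * S p.2 := by
    rw [projExt_eq_sum (D := D) (totalDegree_mul x y), range_succ_eq_insert,
      Finset.sum_insert (by simp)]
    have h0 : ∑ p ∈ Finset.HasAntidiagonal.antidiagonal 0, T p.1 * S p.2 = T 0 * S 0 := by simp
    rw [h0, habs]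
    refine add_le_add le_rfl (Finset.sum_le_sum fun k hk => key k ?_)
    simp only [Finset.mem_Icc] at hk
    omega
  have step2 : ∑ k ∈ Finset.range (D + 1), ∑ p ∈ Finset.HasAntidiagonal.antidiagonal k, T p.1 * S p.2 ≤
      ∑ p ∈ Finset.range (D + 1) ×ˢ Finset.range (D + 1), T p.1 * S p.2 := by
    rw [← Finset.sum_biUnion (by
      intro k₁ _ k₂ _ hne
      simp only [Function.onFun]
      rw [Finset.disjoint_left]
      intro p hp₁ hp₂
      exact hne (by
        have h1 := Finset.HasAntidiagonal.mem_antidiagonal.1 hp₁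
        have h2 := Finset.HasAntidiagonal.mem_antidiagonal.1 hp₂
        omega))]
    refine Finset.sum_le_sum_of_subset_of_nonneg ?_ fun p _ _ =>
      mul_nonneg (hT0 _) (hS0 _)
    intro p hp
    obtain ⟨k, hk, hpk⟩ := Finset.mem_biUnion.1 hp
    have hk' := Finset.mem_range.1 hk
    have hpk' := Finset.HasAntidiagonal.mem_antidiagonal.1 hpk
    refine Finset.mem_product.2 ⟨Finset.mem_range.2 (by omega), Finset.mem_range.2 (by omega)⟩
  have step3 : ∑ p ∈ Finset.range (D + 1) ×ˢ Finset.range (D + 1), T p.1 * S p.2 =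
      projExt ρ x * projExt ρ y := by
    rw [projExt_eq_range_sum (D := D) (Nat.le_add_right _ _),
      projExt_eq_range_sum (D := D) (Nat.le_add_left _ _), Finset.sum_mul_sum,
      Finset.sum_product]
  calc projExt ρ (x * y) ≤ _ := step1
    _ ≤ _ := step2
    _ = _ := step3

end PEAux2

namespace PEAux3
open PEAux PEAux2

variable {Ω : Type*} {ρ : Seminorm ℝ ↥(Vars Ω)}

lemma vars_isHomogeneous (v : ↥(Vars Ω)) : (v : MvPolynomial Ω ℝ).IsHomogeneous 1 := by
  have hle : Vars Ω ≤ homogeneousSubmodule Ω ℝ 1 := by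
    rw [Vars, Submodule.span_le]
    rintro _ ⟨i, rfl⟩
    exact (mem_homogeneousSubmodule _ _).2 (isHomogeneous_X _ _)
  exact (mem_homogeneousSubmodule _ _).1 (hle v.2)

lemma seminorm_sum_le {E ι' : Type*} [AddCommGroup E] [Module ℝ E] (ρ : Seminorm ℝ E)
    (s : Finset ι') (g : ι' → E) : ρ (∑ i ∈ s, g i) ≤ ∑ i ∈ s, ρ (g i) := by
  classical
  induction s using Finset.cons_induction with
  | empty => simp
  | cons a s ha ih =>
    rw [Finset.sum_cons, Finset.sum_cons]
    exact le_trans (map_add_le_add ρ _ _) (add_le_add le_rfl ih)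

lemma projExtHomog_one_coe (v : ↥(Vars Ω)) :
    projExtHomog ρ 1 (v : MvPolynomial Ω ℝ) = ρ v := by
  have hmem : ρ v ∈ RepSet ρ 1 (v : MvPolynomial Ω ℝ) :=
    ⟨1, fun _ _ => v, by simp, by simp⟩
  refine le_antisymm (projExtHomog_le hmem) (le_projExtHomog ⟨_, hmem⟩ ?_)
  rintro r ⟨N, f, hs, rfl⟩
  have hcast : (v : MvPolynomial Ω ℝ) = ((∑ i, f i 0 : ↥(Vars Ω)) : MvPolynomial Ω ℝ) := by
    rw [hs]
    push_cast
    exact Finset.sum_congr rfl fun i _ => Fin.prod_univ_one _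
  have hvsum : v = ∑ i, f i 0 := Subtype.coe_injective hcast
  calc ρ v = ρ (∑ i, f i 0) := by rw [← hvsum]
    _ ≤ ∑ i, ρ (f i 0) := seminorm_sum_le ρ _ _
    _ = ∑ i, ∏ j, ρ (f i j) :=
      Finset.sum_congr rfl fun i _ => (Fin.prod_univ_one fun j => ρ (f i j)).symm

lemma projExt_coe (v : ↥(Vars Ω)) : projExt ρ (v : MvPolynomial Ω ℝ) = ρ v := by
  have h1 : (v : MvPolynomial Ω ℝ).IsHomogeneous 1 := vars_isHomogeneous v
  have hc0 : coeff 0 (v : MvPolynomial Ω ℝ) = 0 :=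
    h1.coeff_eq_zero (by simp [map_zero])
  rw [projExt_eq_sum (D := 1) h1.totalDegree_le, hc0, abs_zero, zero_add,
    Finset.Icc_self, Finset.sum_singleton,
    homogeneousComponent_of_mem ((mem_homogeneousSubmodule _ _).2 h1), if_pos rfl]
  exact projExtHomog_one_coe v

section Submult
variable {q : MvPolynomial Ω ℝ → ℝ} (hq : IsSubmultSeminorm q)
include hq

lemma subq_zero : q 0 = 0 := by
  have := hq.1 0 0
  simpa using this

lemma subq_nonneg (x : MvPolynomial Ω ℝ) : 0 ≤ q x := by
  have hneg : q (-x) = q x := by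
    have := hq.1 (-1) x
    simpa using this
  have h0 : q 0 ≤ q x + q (-x) := by
    have := hq.2.1 x (-x)
    simpa using this
  rw [subq_zero hq, hneg] at h0
  linarith

lemma subq_sum_le {α : Type*} (s : Finset α) (g : α → MvPolynomial Ω ℝ) :
    q (∑ i ∈ s, g i) ≤ ∑ i ∈ s, q (g i) := by
  classical
  induction s using Finset.cons_induction with
  | empty => simp [subq_zero hq]
  | cons a s ha ih =>
    rw [Finset.sum_cons, Finset.sum_cons]
    exact le_trans (hq.2.1 _ _) (add_le_add le_rfl ih)

lemma subq_prod_le : ∀ (k : ℕ), k ≠ 0 → ∀ g : Fin k → MvPolynomial Ω ℝ,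
    q (∏ j, g j) ≤ ∏ j, q (g j) := by
  intro k
  induction k with
  | zero => exact fun h => absurd rfl h
  | succ n ih =>
    intro _ g
    rcases Nat.eq_zero_or_pos n with rfl | hn
    · simp [Fin.prod_univ_one]
    rw [Fin.prod_univ_succ, Fin.prod_univ_succ]
    refine le_trans (hq.2.2 _ _) ?_
    exact mul_le_mul_of_nonneg_left (ih hn.ne' _) (subq_nonneg hq _)

lemma q_le_mul_projExt (hqV : ∀ f : ↥(Vars Ω), q ↑f ≤ ρ f) (x : MvPolynomial Ω ℝ) :
    q x ≤ max (q 1) 1 * projExt ρ x := by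
  classical
  set M := max (q 1) 1 with hM
  have hM1 : (1:ℝ) ≤ M := le_max_right _ _
  conv_lhs => rw [← sum_homogeneousComponent x]
  refine le_trans (subq_sum_le hq _ _) ?_
  rw [range_succ_eq_insert, Finset.sum_insert (by simp),
    projExt_eq_sum (D := x.totalDegree) le_rfl, mul_add, Finset.mul_sum]
  refine add_le_add ?_ (Finset.sum_le_sum fun k hk => ?_)
  · rw [homogeneousComponent_zero]
    have hC : (C (coeff 0 x) : MvPolynomial Ω ℝ) = (coeff 0 x) • 1 := by
      rw [MvPolynomial.smul_eq_C_mul, mul_one]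
    rw [hC, hq.1, mul_comm M (|coeff 0 x|)]
    exact mul_le_mul_of_nonneg_left (le_max_left _ _) (abs_nonneg _)
  · have hk0 : k ≠ 0 := by
      simp only [Finset.mem_Icc] at hk
      omega
    have h1 : q (homogeneousComponent k x) ≤ projExtHomog ρ k (homogeneousComponent k x) := by
      refine le_projExtHomog (repSet_hc_nonempty hk0 x) ?_
      rintro r ⟨N, f, hs, rfl⟩
      rw [hs]
      refine le_trans (subq_sum_le hq _ _) (Finset.sum_le_sum fun i _ => ?_)
      refine le_trans (subq_prod_le hq k hk0 _) (Finset.prod_le_prod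
        (fun j _ => subq_nonneg hq _) fun j _ => hqV _)
    exact le_trans h1 (le_mul_of_one_le_left projExtHomog_nonneg hM1)

end Submult

lemma projExt_isSubmult : IsSubmultSeminorm (projExt ρ) :=
  ⟨fun c x => projExt_smul c x, projExt_add_le, projExt_mul_le⟩

end PEAux3

namespace PEAux4
open PEAux PEAux2 PEAux3 TopologicalSpace

lemma generateOpen_of_ball {E : Type*} {G : Set (Set E)} {U : Set E}
    (h : ∀ x ∈ U, ∃ B ∈ G, x ∈ B ∧ B ⊆ U) : GenerateOpen G U := by
  have hU : U = ⋃₀ {B | B ∈ G ∧ B ⊆ U} := by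
    ext x
    constructor
    · intro hx
      obtain ⟨B, hBG, hxB, hBU⟩ := h x hx
      exact ⟨B, ⟨hBG, hBU⟩, hxB⟩
    · rintro ⟨B, ⟨-, hBU⟩, hxB⟩
      exact hBU hxB
  rw [hU]
  exact GenerateOpen.sUnion _ fun B hB => GenerateOpen.basic B hB.1

lemma generateOpen_finite_inter {E : Type*} {G : Set (Set E)} {U : Set E}
    (hU : GenerateOpen G U) :
    ∀ x ∈ U, ∃ t : Finset (Set E), (∀ B ∈ t, B ∈ G) ∧
      x ∈ ⋂₀ (t : Set (Set E)) ∧ ⋂₀ (t : Set (Set E)) ⊆ U := by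
  classical
  induction hU with
  | basic B hB =>
    intro x hx
    exact ⟨{B}, by simpa using hB, by simpa using hx, by simp⟩
  | univ =>
    intro x _
    exact ⟨∅, by simp, by simp, by simp⟩
  | inter U V hU hV ihU ihV =>
    intro x hx
    obtain ⟨t₁, ht₁, hx₁, hs₁⟩ := ihU x hx.1
    obtain ⟨t₂, ht₂, hx₂, hs₂⟩ := ihV x hx.2
    refine ⟨t₁ ∪ t₂, ?_, ?_, ?_⟩
    · intro B hB
      rcases Finset.mem_union.1 hB with hB | hB
      exacts [ht₁ B hB, ht₂ B hB]
    · rw [Finset.coe_union, Set.sInter_union]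
      exact ⟨hx₁, hx₂⟩
    · rw [Finset.coe_union, Set.sInter_union]
      exact fun y hy => ⟨hs₁ hy.1, hs₂ hy.2⟩
  | sUnion S hS ih =>
    rintro x ⟨U, hUS, hxU⟩
    obtain ⟨t, ht, hxt, hst⟩ := ih U hUS x hxU
    exact ⟨t, ht, hxt, fun y hy => ⟨U, hUS, hst hy⟩⟩

variable {Ω : Type*}

lemma bound_of_unit_ball {q : MvPolynomial Ω ℝ → ℝ} (hq : IsSubmultSeminorm q)
    (ρ : Seminorm ℝ ↥(Vars Ω)) {δ : ℝ} (hδ : 0 < δ)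
    (H : ∀ v : ↥(Vars Ω), ρ v < δ → q ↑v < 1) :
    ∀ v : ↥(Vars Ω), q ↑v ≤ (2 / δ) * ρ v := by
  intro v
  have hsmul : ∀ t : ℝ, q ((t • v : ↥(Vars Ω)) : MvPolynomial Ω ℝ) = |t| * q ↑v := by
    intro t
    rw [Submodule.coe_smul, hq.1]
  rcases eq_or_lt_of_le (apply_nonneg ρ v) with h0 | hpos
  · have hall : ∀ t : ℝ, 0 < t → t * q ↑v < 1 := by
      intro t ht
      have h1 : ρ (t • v) < δ := by
        rw [map_smul_eq_mul, ← h0, mul_zero]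
        exact hδ
      have h2 := H (t • v) h1
      rwa [hsmul, abs_of_pos ht] at h2
    have hle : q ↑v ≤ 0 := by
      by_contra hc
      push_neg at hc
      have := hall (2 / q ↑v) (by positivity)
      rw [div_mul_cancel₀ _ (ne_of_gt hc)] at this
      linarith
    calc q ↑v ≤ 0 := hle
      _ = (2 / δ) * ρ v := by rw [← h0, mul_zero]
  · set t := δ / (2 * ρ v) with htdef
    have ht : 0 < t := by positivity
    have h1 : ρ (t • v) < δ := by
      rw [map_smul_eq_mul, Real.norm_eq_abs, abs_of_pos ht, htdef, mul_comm]
      have heq : ρ v * (δ / (2 * ρ v)) = δ / 2 := by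
        field_simp
      rw [heq]
      linarith
    have h2 := H (t • v) h1
    rw [hsmul, abs_of_pos ht] at h2
    have h3 : q ↑v < 1 / t := by
      rw [lt_div_iff₀ ht, mul_comm]
      exact h2
    have h4 : 1 / t = (2 / δ) * ρ v := by
      rw [htdef]
      field_simp
    linarith

end PEAux4

namespace PEAux5
open PEAux PEAux2 PEAux3 PEAux4 TopologicalSpace

variable {Ω : Type*} {ι : Type*} [Nonempty ι] {P : ι → Seminorm ℝ ↥(Vars Ω)}

lemma ball_in_finite_inter
    (hdir : ∀ i j : ι, ∃ k : ι, ∃ C : ℝ, 0 < C ∧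
      ∀ v : ↥(Vars Ω), max (P i v) (P j v) ≤ C * P k v) :
    ∀ t : Finset (Set ↥(Vars Ω)),
      (∀ B ∈ t, ∃ q ∈ Set.range (fun i : ι => ⇑(P i)), ∃ c : ↥(Vars Ω), ∃ ε : ℝ,
        0 < ε ∧ B = {v : ↥(Vars Ω) | q (v - c) < ε}) →
      (0 : ↥(Vars Ω)) ∈ ⋂₀ (t : Set (Set ↥(Vars Ω))) →
      ∃ k : ι, ∃ δ : ℝ, 0 < δ ∧
        ∀ v : ↥(Vars Ω), P k v < δ → v ∈ ⋂₀ (t : Set (Set ↥(Vars Ω))) := by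
  classical
  intro t
  induction t using Finset.induction_on with
  | empty =>
    intro _ _
    exact ⟨Classical.arbitrary ι, 1, one_pos, by simp⟩
  | @insert B t hBt ih =>
    intro hmem h0
    rw [Finset.coe_insert, Set.sInter_insert] at h0 ⊢
    obtain ⟨k, δ, hδ, hball⟩ := ih (fun B' hB' => hmem B' (Finset.mem_insert_of_mem hB')) h0.2
    obtain ⟨q, ⟨i, rfl⟩, c, ε, hε, rfl⟩ := hmem B (Finset.mem_insert_self B t)
    have h0B : P i ((0 : ↥(Vars Ω)) - c) < ε := h0.1
    set δB := ε - P i ((0 : ↥(Vars Ω)) - c) with hδB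
    have hδB0 : 0 < δB := by rw [hδB]; linarith
    obtain ⟨k', C, hC, hdom⟩ := hdir i k
    refine ⟨k', min δ δB / C, by positivity, fun v hv => ?_⟩
    have hPi : P i v < δB := by
      have h1 : P i v ≤ C * P k' v := le_trans (le_max_left _ _) (hdom v)
      have h2 : C * P k' v < min δ δB := by
        rw [mul_comm, ← lt_div_iff₀ hC]
        exact hv
      exact lt_of_le_of_lt h1 (lt_of_lt_of_le h2 (min_le_right _ _))
    have hPk : P k v < δ := by
      have h1 : P k v ≤ C * P k' v := le_trans (le_max_right _ _) (hdom v)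
      have h2 : C * P k' v < min δ δB := by
        rw [mul_comm, ← lt_div_iff₀ hC]
        exact hv
      exact lt_of_le_of_lt h1 (lt_of_lt_of_le h2 (min_le_left _ _))
    refine ⟨?_, hball v hPk⟩
    show P i (v - c) < ε
    have hsplit : v - c = v + ((0 : ↥(Vars Ω)) - c) := by abel
    calc P i (v - c) = P i (v + ((0 : ↥(Vars Ω)) - c)) := by rw [← hsplit]
      _ ≤ P i v + P i ((0 : ↥(Vars Ω)) - c) := map_add_le_add _ _ _
      _ < δB + P i ((0 : ↥(Vars Ω)) - c) := by linarith
      _ = ε := by rw [hδB]; ring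

lemma smul_seminorm_apply (n : ℕ) (ρ : Seminorm ℝ ↥(Vars Ω)) (v : ↥(Vars Ω)) :
    ((n : NNReal) • ρ) v = n * ρ v := by simp [NNReal.smul_def]

end PEAux5

/-- **`τ̄` is the finest lmc topology on `ℝ[x_i : i ∈ Ω]` extending `τ` ([GIKM,
Prop. 5.1]).** Let `P` be a directed family of seminorms generating a locally convex
topology `τ` on `V`, and let `τ̄` be the topology on `A` generated by the projective
extensions `(nρ)‾`, `ρ ∈ P`, `n ∈ ℕ`. Then: each `(nρ)‾` is a submultiplicative
seminorm (so `τ̄` is locally multiplicatively convex); the topology induced by `τ̄` on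
`V` via the inclusion `V ↪ A` is `τ`; and for every lmc topology `ω` on `A` (generated
by a family of submultiplicative seminorms) making the inclusion `(V, τ) ↪ (A, ω)`
continuous, the identity `(A, τ̄) → (A, ω)` is continuous, i.e. `ω` is coarser
than `τ̄`. -/
theorem projExt_topology_finest_lmc.{u} (Ω : Type*)
    {ι : Type*} [Nonempty ι] (P : ι → Seminorm ℝ ↥(Vars Ω))
    (hdir : ∀ i j : ι, ∃ k : ι, ∃ C : ℝ, 0 < C ∧
      ∀ v : ↥(Vars Ω), max (P i v) (P j v) ≤ C * P k v) :
    (∀ (i : ι) (n : ℕ), 0 < n → IsSubmultSeminorm (projExt ((n : ℝ≥0) • P i))) ∧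
      (TopologicalSpace.induced (fun v : ↥(Vars Ω) => (v : MvPolynomial Ω ℝ))
          (seminormsTopology
            {q : MvPolynomial Ω ℝ → ℝ |
              ∃ (i : ι) (n : ℕ), 0 < n ∧ q = projExt ((n : ℝ≥0) • P i)}) =
        seminormsTopology (Set.range fun i : ι => ⇑(P i))) ∧
      ∀ (κ : Type u) (S : κ → (MvPolynomial Ω ℝ → ℝ)),
        (∀ j : κ, IsSubmultSeminorm (S j)) →
        @Continuous ↥(Vars Ω) (MvPolynomial Ω ℝ)
            (seminormsTopology (Set.range fun i : ι => ⇑(P i)))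
            (seminormsTopology (Set.range S))
            (fun v : ↥(Vars Ω) => (v : MvPolynomial Ω ℝ)) →
        @Continuous (MvPolynomial Ω ℝ) (MvPolynomial Ω ℝ)
            (seminormsTopology
              {q : MvPolynomial Ω ℝ → ℝ |
                ∃ (i : ι) (n : ℕ), 0 < n ∧ q = projExt ((n : ℝ≥0) • P i)})
            (seminormsTopology (Set.range S)) id := by
  
  classical
  refine ⟨fun i n hn => PEAux3.projExt_isSubmult, ?_, ?_⟩
  · -- restriction of τ̄ to V is τ
    unfold seminormsTopology
    rw [induced_generateFrom_eq]
    apply le_antisymm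
    · refine le_generateFrom ?_
      rintro U ⟨q, ⟨i, rfl⟩, c, ε, hε, rfl⟩
      refine PEAux4.generateOpen_of_ball ?_
      intro v0 hv0
      have hv0' : P i (v0 - c) < ε := hv0
      have hδ : 0 < ε - P i (v0 - c) := by linarith
      set ρ1 : Seminorm ℝ ↥(Vars Ω) := ((1 : ℕ) : ℝ≥0) • P i with hρ1
      refine ⟨(fun v : ↥(Vars Ω) => (v : MvPolynomial Ω ℝ)) ⁻¹'
        {x | projExt ρ1 (x - ↑v0) < ε - P i (v0 - c)}, ?_, ?_, ?_⟩
      · exact ⟨{x | projExt ρ1 (x - ↑v0) < ε - P i (v0 - c)},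
          ⟨projExt ρ1, ⟨i, 1, one_pos, rfl⟩, ↑v0, ε - P i (v0 - c), hδ, rfl⟩, rfl⟩
      · show projExt ρ1 ((v0 : MvPolynomial Ω ℝ) - ↑v0) < ε - P i (v0 - c)
        rw [sub_self, PEAux.projExt_zero]
        exact hδ
      · intro v hv
        have hv' : projExt ρ1 ((v : MvPolynomial Ω ℝ) - ↑v0) < ε - P i (v0 - c) := hv
        have hcoe : ((v : MvPolynomial Ω ℝ) - ↑v0) = ((v - v0 : ↥(Vars Ω)) : MvPolynomial Ω ℝ) := by
          push_cast
          ring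
        rw [hcoe, PEAux3.projExt_coe, hρ1] at hv'
        rw [PEAux5.smul_seminorm_apply, Nat.cast_one, one_mul] at hv'
        show P i (v - c) < ε
        calc P i (v - c) = P i ((v - v0) + (v0 - c)) := by rw [sub_add_sub_cancel]
          _ ≤ P i (v - v0) + P i (v0 - c) := map_add_le_add _ _ _
          _ < ε := by linarith
    · refine le_generateFrom ?_
      rintro U ⟨B, ⟨q, ⟨i, n, hn, rfl⟩, c, ε, hε, rfl⟩, rfl⟩
      refine PEAux4.generateOpen_of_ball ?_
      intro v0 hv0
      have hv0' : projExt ((n : ℝ≥0) • P i) ((v0 : MvPolynomial Ω ℝ) - c) < ε := hv0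
      have hδ : 0 < ε - projExt ((n : ℝ≥0) • P i) ((v0 : MvPolynomial Ω ℝ) - c) := by linarith
      have hn' : (0:ℝ) < n := by exact_mod_cast hn
      refine ⟨{v : ↥(Vars Ω) | P i (v - v0) <
          (ε - projExt ((n : ℝ≥0) • P i) ((v0 : MvPolynomial Ω ℝ) - c)) / n},
        ⟨⇑(P i), ⟨i, rfl⟩, v0, _, by positivity, rfl⟩, ?_, ?_⟩
      · show P i (v0 - v0) < _
        rw [sub_self, map_zero]
        positivity
      · intro v hv
        have hv' : P i (v - v0) <
            (ε - projExt ((n : ℝ≥0) • P i) ((v0 : MvPolynomial Ω ℝ) - c)) / n := hv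
        show projExt ((n : ℝ≥0) • P i) ((v : MvPolynomial Ω ℝ) - c) < ε
        have hcoe : ((v : MvPolynomial Ω ℝ) - ↑v0) = ((v - v0 : ↥(Vars Ω)) : MvPolynomial Ω ℝ) := by
          push_cast
          ring
        have h1 : projExt ((n : ℝ≥0) • P i) ((v : MvPolynomial Ω ℝ) - ↑v0) =
            n * P i (v - v0) := by
          rw [hcoe, PEAux3.projExt_coe, PEAux5.smul_seminorm_apply]
        have h2 : projExt ((n : ℝ≥0) • P i) ((v : MvPolynomial Ω ℝ) - c) ≤
            projExt ((n : ℝ≥0) • P i) ((v : MvPolynomial Ω ℝ) - ↑v0) +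
              projExt ((n : ℝ≥0) • P i) ((v0 : MvPolynomial Ω ℝ) - c) := by
          have := (PEAux3.projExt_isSubmult (ρ := (n : ℝ≥0) • P i)).2.1
            ((v : MvPolynomial Ω ℝ) - ↑v0) ((v0 : MvPolynomial Ω ℝ) - c)
          rwa [sub_add_sub_cancel] at this
        have h3 : n * P i (v - v0) <
            ε - projExt ((n : ℝ≥0) • P i) ((v0 : MvPolynomial Ω ℝ) - c) := by
          rw [mul_comm, ← lt_div_iff₀ hn']
          exact hv'
        rw [h1] at h2
        linarith
  · -- finest lmc topology
    intro κ S hS hcont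
    refine continuous_generateFrom_iff.2 ?_
    rintro U ⟨q, ⟨j, rfl⟩, c, ε, hε, rfl⟩
    rw [Set.preimage_id]
    have hSj := hS j
    -- bound S j on V by some P k
    have hopen : @IsOpen ↥(Vars Ω) (seminormsTopology (Set.range fun i : ι => ⇑(P i)))
        ((fun v : ↥(Vars Ω) => (v : MvPolynomial Ω ℝ)) ⁻¹' {x | S j (x - 0) < 1}) := by
      refine continuous_def.1 hcont _ ?_
      exact TopologicalSpace.GenerateOpen.basic _ ⟨S j, ⟨j, rfl⟩, 0, 1, one_pos, rfl⟩
    have h0mem : (0 : ↥(Vars Ω)) ∈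
        ((fun v : ↥(Vars Ω) => (v : MvPolynomial Ω ℝ)) ⁻¹' {x | S j (x - 0) < 1}) := by
      show S j (((0 : ↥(Vars Ω)) : MvPolynomial Ω ℝ) - 0) < 1
      rw [Submodule.coe_zero, sub_zero, PEAux3.subq_zero hSj]
      exact one_pos
    obtain ⟨t, htG, h0t, htsub⟩ := PEAux4.generateOpen_finite_inter hopen 0 h0mem
    obtain ⟨k, δ, hδ, hball⟩ := PEAux5.ball_in_finite_inter hdir t htG h0t
    have hbound : ∀ v : ↥(Vars Ω), S j ↑v ≤ (2 / δ) * P k v := by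
      refine PEAux4.bound_of_unit_ball hSj (P k) hδ ?_
      intro v hv
      have hmem := htsub (hball v hv)
      simpa using hmem
    set n : ℕ := max 1 ⌈2 / δ⌉₊ with hndef
    have hn0 : 0 < n := lt_of_lt_of_le one_pos (le_max_left _ _)
    have hbound2 : ∀ f : ↥(Vars Ω), S j ↑f ≤ ((n : ℝ≥0) • P k) f := by
      intro f
      rw [PEAux5.smul_seminorm_apply]
      refine le_trans (hbound f) (mul_le_mul_of_nonneg_right ?_ (apply_nonneg _ _))
      calc (2 / δ : ℝ) ≤ (⌈2 / δ⌉₊ : ℝ) := Nat.le_ceil _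
        _ ≤ n := by exact_mod_cast Nat.cast_le.2 (le_max_right 1 ⌈2 / δ⌉₊)
    have hq := PEAux3.q_le_mul_projExt hSj hbound2
    set M := max (S j 1) 1 with hMdef
    have hM : (0:ℝ) < M := lt_of_lt_of_le one_pos (le_max_right _ _)
    refine PEAux4.generateOpen_of_ball ?_
    intro x0 hx0
    have hx0' : S j (x0 - c) < ε := hx0
    have hδ2 : 0 < (ε - S j (x0 - c)) / M := by
      apply div_pos
      · linarith
      · exact hM
    refine ⟨{x | projExt ((n : ℝ≥0) • P k) (x - x0) < (ε - S j (x0 - c)) / M},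
      ⟨projExt ((n : ℝ≥0) • P k), ⟨k, n, hn0, rfl⟩, x0, _, hδ2, rfl⟩, ?_, ?_⟩
    · show projExt ((n : ℝ≥0) • P k) (x0 - x0) < _
      rw [sub_self, PEAux.projExt_zero]
      exact hδ2
    · intro x hx
      have hx' : projExt ((n : ℝ≥0) • P k) (x - x0) < (ε - S j (x0 - c)) / M := hx
      show S j (x - c) < ε
      have h1 : S j (x - x0) ≤ M * projExt ((n : ℝ≥0) • P k) (x - x0) := hq _
      have h2 : M * projExt ((n : ℝ≥0) • P k) (x - x0) < M * ((ε - S j (x0 - c)) / M) :=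
        mul_lt_mul_of_pos_left hx' hM
      have h3 : M * ((ε - S j (x0 - c)) / M) = ε - S j (x0 - c) := by
        field_simp
      have h4 : S j (x - c) ≤ S j (x - x0) + S j (x0 - c) := by
        have := hSj.2.1 (x - x0) (x0 - c)
        rwa [sub_add_sub_cancel] at this
      linarith
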